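/- Let m ∈ ℕ, A ⊆ ℕ^m be a complete set of multi-indices, and let P_A be nodes generated per the essential assumptions. Then for every β ∈ A the monomial x^β lies in the span of the Newton polynomials {N_α : α ∈ A, α ≤_L β}; consequently, the change-of-basis matrix CN_A = (c^β_α)_{α,β∈A} from the canonical monomial basis {x^β}_{β∈A} to the Newton basis {N_α}_{α∈A} of Π_A, defined by x^β = Σ_{α∈A} c^β_α N_α, is upper triangular (c^β_α = 0 for α >_L β) and invertible. -/

import Mathlib

open MvPolynomial
open scoped Classical

noncomputable section

/-- The polynomial space `Π_A` spanned by the monomials `x^α`, `α ∈ A`. -/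
def PiA (m : ℕ) (A : Finset (Fin m → ℕ)) : Submodule ℝ (MvPolynomial (Fin m) ℝ) :=
  Submodule.span ℝ ((fun α : Fin m → ℕ => ∏ i, X i ^ α i) '' ↑A)

/-- `A ⊆ ℕ^m` is a complete (downward closed) set of multi-indices. -/
def CompleteIdx {m : ℕ} (A : Finset (Fin m → ℕ)) : Prop :=
  ∀ α ∈ A, ∀ β : Fin m → ℕ, (∀ i, β i ≤ α i) → β ∈ A

/-- The node `p_α = (p_{α₁,1},…,p_{α_m,m})` generated from generating nodes `p`. -/
def node {m : ℕ} (p : Fin m → ℕ → ℝ) (α : Fin m → ℕ) : Fin m → ℝ := fun i => p i (α i)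

/-- The generating nodes `p_{0,i},…,p_{n_i,i}`, `n_i = max_{α∈A} α_i`, are pairwise
distinct in each dimension `i` (essential assumptions, Definition 2.8). -/
def GenDistinct {m : ℕ} (A : Finset (Fin m → ℕ)) (p : Fin m → ℕ → ℝ) : Prop :=
  ∀ i : Fin m, ∀ j k : ℕ, j ≤ A.sup (fun α => α i) → k ≤ A.sup (fun α => α i) →
    p i j = p i k → j = k

/-- The multivariate Newton polynomial `N_α(x) = ∏_i ∏_{j<α_i} (x_i - p_{j,i})`. -/
def newton {m : ℕ} (p : Fin m → ℕ → ℝ) (α : Fin m → ℕ) : MvPolynomial (Fin m) ℝ :=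
  ∏ i, ∏ j ∈ Finset.range (α i), (X i - C (p i j))

/-- `P` is unisolvent with respect to the polynomial subspace `W`: the only
polynomial in `W` vanishing on all of `P` is `0`. -/
def Unisolvent {m : ℕ} (P : Set (Fin m → ℝ)) (W : Submodule ℝ (MvPolynomial (Fin m) ℝ)) :
    Prop :=
  ∀ Q ∈ W, (∀ x ∈ P, eval x Q = 0) → Q = 0

/-- Lexicographic order `<_L` on multi-indices, comparing from the last coordinate
`x_m` down to the first `x_1`. -/
def lexLt {m : ℕ} (α β : Fin m → ℕ) : Prop :=
  ∃ k : Fin m, α k < β k ∧ ∀ j : Fin m, k < j → α j = β j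

/-- `α ≤_L β`. -/
def lexLe {m : ℕ} (α β : Fin m → ℕ) : Prop := α = β ∨ lexLt α β

namespace CanonNewtonAux

variable {m : ℕ}

lemma sum_single_apply (s : Finset (Fin m)) (α : Fin m → ℕ) (j : Fin m) :
    (∑ i ∈ s, Finsupp.single i (α i)) j = if j ∈ s then α j else 0 := by
  rw [Finset.sum_apply']
  simp only [Finsupp.single_apply]
  exact Finset.sum_ite_eq' s j α

lemma coeff_prod_linear (a : Fin m) (c : ℕ → ℝ) (n : ℕ) :
    (∀ d : Fin m →₀ ℕ,
      coeff d (∏ j ∈ Finset.range n, (X a - C (c j)) : MvPolynomial (Fin m) ℝ) ≠ 0 →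
      (∀ i, i ≠ a → d i = 0) ∧ d a ≤ n) ∧
    coeff (Finsupp.single a n) (∏ j ∈ Finset.range n, (X a - C (c j)) : MvPolynomial (Fin m) ℝ)
      = 1 := by
  induction n with
  | zero =>
    constructor
    · intro d hd
      rw [Finset.range_zero, Finset.prod_empty, coeff_one] at hd
      have hd0 : d = 0 := by
        by_contra h
        simp [Ne.symm h] at hd
      subst hd0
      exact ⟨fun i _ => rfl, le_rfl⟩
    · simp [coeff_one]
  | succ n ih =>
    rw [Finset.prod_range_succ]
    set P : MvPolynomial (Fin m) ℝ := ∏ j ∈ Finset.range n, (X a - C (c j)) with hP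
    have hexp : ∀ d : Fin m →₀ ℕ, coeff d (P * (X a - C (c n))) =
        (if a ∈ d.support then coeff (d - Finsupp.single a 1) P else 0) - c n * coeff d P := by
      intro d
      rw [mul_sub, coeff_sub, coeff_mul_X', mul_comm P (C (c n)), coeff_C_mul]
    constructor
    · intro d hd
      rw [hexp] at hd
      have h1 : (a ∈ d.support ∧ coeff (d - Finsupp.single a 1) P ≠ 0) ∨ coeff d P ≠ 0 := by
        by_contra h
        push_neg at h
        obtain ⟨h1, h2⟩ := h
        have : (if a ∈ d.support then coeff (d - Finsupp.single a 1) P else 0) = 0 := by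
          by_cases ha : a ∈ d.support
          · simp [ha, h1 ha]
          · simp [ha]
        rw [this, h2, mul_zero, sub_zero] at hd
        exact hd rfl
      rcases h1 with ⟨ha, hc⟩ | hc
      · obtain ⟨hz, hle⟩ := ih.1 _ hc
        constructor
        · intro i hi
          have := hz i hi
          rwa [Finsupp.tsub_apply, Finsupp.single_apply, if_neg (Ne.symm hi),
            Nat.sub_zero] at this
        · have := hle
          rw [Finsupp.tsub_apply, Finsupp.single_apply, if_pos rfl] at this
          omega
      · obtain ⟨hz, hle⟩ := ih.1 _ hc
        exact ⟨hz, hle.trans (Nat.le_succ n)⟩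
    · rw [hexp]
      have hmem : a ∈ (Finsupp.single a (n + 1)).support := by
        simp
      rw [if_pos hmem]
      have hsub : Finsupp.single a (n + 1) - Finsupp.single a 1 = Finsupp.single a n := by
        ext i
        rw [Finsupp.tsub_apply]
        simp only [Finsupp.single_apply]
        by_cases h : a = i <;> simp [h]
      have hzero : coeff (Finsupp.single a (n + 1)) P = 0 := by
        by_contra h
        have := (ih.1 _ h).2
        simp at this
      rw [hsub, ih.2, hzero, mul_zero, sub_zero]

lemma coeff_newton_prod (p : Fin m → ℕ → ℝ) (α : Fin m → ℕ) (s : Finset (Fin m)) :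
    (∀ d : Fin m →₀ ℕ,
      coeff d (∏ i ∈ s, ∏ j ∈ Finset.range (α i), (X i - C (p i j)) : MvPolynomial (Fin m) ℝ)
        ≠ 0 → (∀ i ∈ s, d i ≤ α i) ∧ ∀ i ∉ s, d i = 0) ∧
    coeff (∑ i ∈ s, Finsupp.single i (α i))
      (∏ i ∈ s, ∏ j ∈ Finset.range (α i), (X i - C (p i j)) : MvPolynomial (Fin m) ℝ) = 1 := by
  induction s using Finset.induction_on with
  | empty =>
    constructor
    · intro d hd
      rw [Finset.prod_empty, coeff_one] at hd
      have hd0 : d = 0 := by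
        by_contra h
        simp [Ne.symm h] at hd
      subst hd0
      exact ⟨fun i hi => absurd hi (Finset.notMem_empty i), fun i _ => rfl⟩
    · simp [coeff_one]
  | @insert a s ha ih =>
    rw [Finset.prod_insert ha, Finset.sum_insert ha]
    set g : MvPolynomial (Fin m) ℝ := ∏ j ∈ Finset.range (α a), (X a - C (p a j)) with hg
    set Q : MvPolynomial (Fin m) ℝ :=
      ∏ i ∈ s, ∏ j ∈ Finset.range (α i), (X i - C (p i j)) with hQ
    have hga := coeff_prod_linear a (p a) (α a)
    constructor
    · intro d hd
      rw [coeff_mul] at hd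
      obtain ⟨⟨u, v⟩, huv, hne⟩ := Finset.exists_ne_zero_of_sum_ne_zero hd
      rw [Finset.HasAntidiagonal.mem_antidiagonal] at huv
      have hu : coeff u g ≠ 0 := fun h => hne (by simp [h])
      have hv : coeff v Q ≠ 0 := fun h => hne (by simp [h])
      obtain ⟨huz, hua⟩ := hga.1 u hu
      obtain ⟨hvle, hvz⟩ := ih.1 v hv
      have hd_apply : ∀ i, d i = u i + v i := fun i => by
        rw [← huv]; rfl
      constructor
      · intro i hi
        rcases Finset.mem_insert.1 hi with rfl | hi'
        · rw [hd_apply i, hvz i ha]; omega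
        · rw [hd_apply i, huz i (fun h => ha (h ▸ hi'))]
          simpa using hvle i hi'
      · intro i hi
        have hia : i ≠ a := fun h => hi (h ▸ Finset.mem_insert_self a s)
        have his : i ∉ s := fun h => hi (Finset.mem_insert_of_mem h)
        rw [hd_apply i, huz i hia, hvz i his]
    · rw [coeff_mul]
      set D : Fin m →₀ ℕ := ∑ i ∈ s, Finsupp.single i (α i) with hD
      have hDa : D a = 0 := by
        rw [hD, sum_single_apply, if_neg ha]
      rw [Finset.sum_eq_single_of_mem (Finsupp.single a (α a), D)
        (Finset.HasAntidiagonal.mem_antidiagonal.2 rfl)]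
      · rw [hga.2, ih.2, one_mul]
      · rintro ⟨u, v⟩ huv hne
        rw [Finset.HasAntidiagonal.mem_antidiagonal] at huv
        by_contra hprod
        have hu : coeff u g ≠ 0 := fun h => hprod (by simp [h])
        have hv : coeff v Q ≠ 0 := fun h => hprod (by simp [h])
        obtain ⟨huz, _⟩ := hga.1 u hu
        obtain ⟨_, hvz⟩ := ih.1 v hv
        have hsum_apply : ∀ i, u i + v i = Finsupp.single a (α a) i + D i := fun i => by
          rw [← Finsupp.add_apply, ← Finsupp.add_apply, huv]
        have hueq : u = Finsupp.single a (α a) := by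
          ext i
          by_cases hia : i = a
          · subst hia
            have := hsum_apply i
            rw [hvz i ha, hDa, Finsupp.single_apply, if_pos rfl] at this
            rw [Finsupp.single_apply, if_pos rfl]
            omega
          · rw [huz i hia, Finsupp.single_apply, if_neg (Ne.symm hia)]
        have hveq : v = D := by
          have h3 := huv
          rw [hueq] at h3
          exact add_left_cancel h3
        exact hne (by rw [hueq, hveq])

lemma newton_support (p : Fin m → ℕ → ℝ) (α : Fin m → ℕ) (d : Fin m →₀ ℕ)
    (hd : coeff d (newton p α) ≠ 0) : ∀ i, d i ≤ α i := by
  have := (coeff_newton_prod p α Finset.univ).1 d hd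
  exact fun i => this.1 i (Finset.mem_univ i)

lemma newton_diag (p : Fin m → ℕ → ℝ) (α : Fin m → ℕ) :
    coeff (Finsupp.equivFunOnFinite.symm α) (newton p α) = 1 := by
  have he : (Finsupp.equivFunOnFinite.symm α : Fin m →₀ ℕ)
      = ∑ i ∈ Finset.univ, Finsupp.single i (α i) := by
    ext j
    rw [sum_single_apply, if_pos (Finset.mem_univ j)]
    rfl
  rw [he]
  exact (coeff_newton_prod p α Finset.univ).2

lemma monomial_eq_prod (β : Fin m → ℕ) :
    (∏ i, X i ^ β i : MvPolynomial (Fin m) ℝ)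
      = monomial (Finsupp.equivFunOnFinite.symm β) 1 := by
  rw [← prod_X_pow_eq_monomial]
  symm
  apply Finset.prod_subset (Finset.subset_univ _)
  intro x _ hx
  rw [Finsupp.notMem_support_iff] at hx
  have h : (Finsupp.equivFunOnFinite.symm β) x = β x := rfl
  rw [h] at hx ⊢
  rw [hx, pow_zero]

lemma lexLt_irrefl (α : Fin m → ℕ) : ¬ lexLt α α := by
  rintro ⟨k, hk, -⟩
  exact lt_irrefl _ hk

lemma lexLt_trans {a b c : Fin m → ℕ} (h1 : lexLt a b) (h2 : lexLt b c) : lexLt a c := by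
  obtain ⟨k1, hk1, hag1⟩ := h1
  obtain ⟨k2, hk2, hag2⟩ := h2
  rcases lt_trichotomy k1 k2 with h | h | h
  · exact ⟨k2, by rw [hag1 k2 h]; exact hk2,
      fun j hj => (hag1 j (h.trans hj)).trans (hag2 j hj)⟩
  · subst h
    exact ⟨k1, hk1.trans hk2, fun j hj => (hag1 j hj).trans (hag2 j hj)⟩
  · exact ⟨k1, by rw [← hag2 k1 h]; exact hk1,
      fun j hj => (hag1 j hj).trans (hag2 j (h.trans hj))⟩

lemma lex_trichotomy (α β : Fin m → ℕ) : lexLt α β ∨ α = β ∨ lexLt β α := by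
  by_cases h : α = β
  · exact Or.inr (Or.inl h)
  have hne : (Finset.univ.filter (fun i => α i ≠ β i)).Nonempty := by
    by_contra hc
    rw [Finset.not_nonempty_iff_eq_empty, Finset.filter_eq_empty_iff] at hc
    exact h (funext fun i => not_not.1 (hc (Finset.mem_univ i)))
  set D := Finset.univ.filter (fun i => α i ≠ β i) with hDdef
  set k := D.max' hne with hk
  have hkD : k ∈ D := D.max'_mem hne
  have hkne : α k ≠ β k := (Finset.mem_filter.1 hkD).2
  have hag : ∀ j, k < j → α j = β j := by
    intro j hj
    by_contra hc
    have : j ∈ D := Finset.mem_filter.2 ⟨Finset.mem_univ j, hc⟩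
    exact absurd (D.le_max' j this) (not_le.2 hj)
  rcases lt_or_gt_of_ne hkne with hlt | hgt
  · exact Or.inl ⟨k, hlt, hag⟩
  · exact Or.inr (Or.inr ⟨k, hgt, fun j hj => (hag j hj).symm⟩)

lemma expand_in_A (A : Finset (Fin m → ℕ)) (f : MvPolynomial (Fin m) ℝ)
    (hf : ∀ d : Fin m →₀ ℕ, coeff d f ≠ 0 → (⇑d : Fin m → ℕ) ∈ A) :
    f = ∑ γ ∈ A, monomial (Finsupp.equivFunOnFinite.symm γ)
      (coeff (Finsupp.equivFunOnFinite.symm γ) f) := by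
  have h1 : ∑ γ ∈ A, monomial (Finsupp.equivFunOnFinite.symm γ)
      (coeff (Finsupp.equivFunOnFinite.symm γ) f)
      = ∑ d ∈ A.image (fun γ => Finsupp.equivFunOnFinite.symm γ), monomial d (coeff d f) := by
    rw [Finset.sum_image]
    intro x _ y _ h
    exact Finsupp.equivFunOnFinite.symm.injective h
  rw [h1]
  have hsub : f.support ⊆ A.image (fun γ => Finsupp.equivFunOnFinite.symm γ) := by
    intro d hd
    rw [mem_support_iff] at hd
    refine Finset.mem_image.2 ⟨⇑d, hf d hd, ?_⟩
    exact Finsupp.equivFunOnFinite_symm_coe d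
  conv_lhs => rw [f.as_sum]
  apply Finset.sum_subset hsub
  intro d _ hd
  rw [notMem_support_iff] at hd
  rw [hd, monomial_zero]

/-- Type synonym for multi-indices carrying the lexicographic linear order. -/
def MIx (m : ℕ) : Type := Fin m → ℕ

/-- View an `MIx` as a function. -/
def MIx.toFun {m : ℕ} (a : MIx m) : Fin m → ℕ := a

instance MIx.isSTO {m : ℕ} :
    IsStrictTotalOrder (MIx m) (fun a b : MIx m => lexLt a.toFun b.toFun) where
  irrefl a := lexLt_irrefl _
  trans a b c := lexLt_trans
  trichotomous a b := by
    intro h1 h2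
    rcases lex_trichotomy a.toFun b.toFun with h | h | h
    · exact absurd h h1
    · exact h
    · exact absurd h h2

noncomputable instance MIx.linearOrder {m : ℕ} : LinearOrder (MIx m) :=
  @linearOrderOfSTO _ (fun a b : MIx m => lexLt a.toFun b.toFun) MIx.isSTO
    (fun _ _ => Classical.dec _)

lemma MIx.lt_iff {m : ℕ} (a b : MIx m) : a < b ↔ lexLt a.toFun b.toFun := Iff.rfl

end CanonNewtonAux

open CanonNewtonAux in
/-- For every `β ∈ A` the monomial `x^β` lies in the span of the
Newton polynomials `{N_α : α ∈ A, α ≤_L β}`; consequently the change-of-basis matrix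
`CN_A` from the canonical monomial basis to the Newton basis, defined by
`x^β = Σ_α (CN_A)_{αβ} N_α`, is upper triangular and invertible. -/
theorem canonical_to_newton (m : ℕ) (A : Finset (Fin m → ℕ))
    (hA : CompleteIdx A) (p : Fin m → ℕ → ℝ) (hp : GenDistinct A p) :
    (∀ β ∈ A, (∏ i, X i ^ β i) ∈
      Submodule.span ℝ {Q : MvPolynomial (Fin m) ℝ | ∃ α ∈ A, lexLe α β ∧ Q = newton p α}) ∧
    ∃ CN : Matrix {α // α ∈ A} {α // α ∈ A} ℝ,
      (∀ α β : {α // α ∈ A}, lexLt (β : Fin m → ℕ) (α : Fin m → ℕ) → CN α β = 0) ∧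
      IsUnit CN ∧
      ∀ β : {α // α ∈ A},
        (∏ i, X i ^ (β : Fin m → ℕ) i) = ∑ α ∈ A.attach, CN α β • newton p ↑α := by
  -- the ranking map into the lexicographically ordered type
  set bmap : {α // α ∈ A} → MIx m := fun a => (show MIx m from (a : Fin m → ℕ)) with hbmap
  have hbinj : Function.Injective bmap := fun x y h => Subtype.ext h
  have hblt : ∀ a b : {α // α ∈ A},
      bmap a < bmap b ↔ lexLt (a : Fin m → ℕ) ↑b := fun a b => Iff.rfl
  -- the matrix of Newton coefficients
  set E : Matrix {α // α ∈ A} {α // α ∈ A} ℝ :=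
    fun γ δ => coeff (Finsupp.equivFunOnFinite.symm (γ : Fin m → ℕ)) (newton p ↑δ) with hE
  have hEtri : E.BlockTriangular bmap := by
    intro i j hij
    rw [hE]
    by_contra h
    have hle := newton_support p ↑j _ h
    obtain ⟨k, hk, -⟩ := (hblt j i).1 hij
    have : (i : Fin m → ℕ) k ≤ (j : Fin m → ℕ) k := by
      have := hle k
      simpa using this
    omega
  have hEdiag : ∀ a : {α // α ∈ A}, E a a = 1 := fun a => newton_diag p ↑a
  have hEdet : E.det = 1 := by
    rw [hEtri.det]
    apply Finset.prod_eq_one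
    intro a ha
    obtain ⟨i0, -, hi0⟩ := Finset.mem_image.1 ha
    haveI : Unique {i // bmap i = a} :=
      { default := ⟨i0, hi0⟩
        uniq := fun j => Subtype.ext (hbinj (j.2.trans hi0.symm)) }
    rw [Matrix.det_unique]
    simp only [Matrix.toSquareBlock_def]
    exact hEdiag _
  have hEunit : IsUnit E.det := by rw [hEdet]; exact isUnit_one
  haveI : Invertible E := E.invertibleOfIsUnitDet hEunit
  set CN : Matrix {α // α ∈ A} {α // α ∈ A} ℝ := E⁻¹ with hCN
  have hCNtri : CN.BlockTriangular bmap :=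
    Matrix.blockTriangular_inv_of_blockTriangular hEtri
  have hCN0 : ∀ α β : {α // α ∈ A}, lexLt (β : Fin m → ℕ) (α : Fin m → ℕ) → CN α β = 0 :=
    fun α β h => hCNtri ((hblt β α).2 h)
  have hCNunit : IsUnit CN := by
    rw [Matrix.isUnit_iff_isUnit_det, hCN, E.det_nonsing_inv, hEdet]
    simp
  -- expansion of Newton polynomials in monomials
  have hexp : ∀ δ : {α // α ∈ A},
      newton p ↑δ = ∑ γ ∈ A.attach, E γ δ • (∏ i, X i ^ ((γ : Fin m → ℕ) i)) := by
    intro δ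
    have hf : ∀ d : Fin m →₀ ℕ, coeff d (newton p ↑δ) ≠ 0 → (⇑d : Fin m → ℕ) ∈ A := by
      intro d hd
      exact hA ↑δ δ.2 ⇑d (newton_support p ↑δ d hd)
    have h1 := expand_in_A A (newton p ↑δ) hf
    rw [Finset.sum_attach A (fun γ => coeff (Finsupp.equivFunOnFinite.symm γ) (newton p ↑δ)
      • (∏ i, X i ^ γ i))]
    calc newton p ↑δ = _ := h1
    _ = _ := by
      apply Finset.sum_congr rfl
      intro γ _
      rw [monomial_eq_prod, smul_monomial, smul_eq_mul, mul_one]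
  -- the key identity
  have heq : ∀ β : {α // α ∈ A},
      (∏ i, X i ^ ((β : Fin m → ℕ) i)) = ∑ α ∈ A.attach, CN α β • newton p ↑α := by
    intro β
    have h2 : ∑ α ∈ A.attach, CN α β • newton p ↑α
        = ∑ γ ∈ A.attach, ((E * CN) γ β) • (∏ i, X i ^ ((γ : Fin m → ℕ) i)) := by
      calc ∑ α ∈ A.attach, CN α β • newton p ↑α
          = ∑ α ∈ A.attach, ∑ γ ∈ A.attach,
              (E γ α * CN α β) • (∏ i, X i ^ ((γ : Fin m → ℕ) i)) := by
            apply Finset.sum_congr rfl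
            intro α _
            rw [hexp α, Finset.smul_sum]
            apply Finset.sum_congr rfl
            intro γ _
            rw [smul_smul, mul_comm]
        _ = ∑ γ ∈ A.attach, ∑ α ∈ A.attach,
              (E γ α * CN α β) • (∏ i, X i ^ ((γ : Fin m → ℕ) i)) := Finset.sum_comm
        _ = ∑ γ ∈ A.attach, ((E * CN) γ β) • (∏ i, X i ^ ((γ : Fin m → ℕ) i)) := by
            apply Finset.sum_congr rfl
            intro γ _
            rw [Matrix.mul_apply, ← Finset.sum_smul, Finset.univ_eq_attach]
    rw [h2, hCN, Matrix.mul_nonsing_inv E hEunit]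
    rw [Finset.sum_eq_single_of_mem β (Finset.mem_attach A β)]
    · rw [Matrix.one_apply_eq, one_smul]
    · intro γ _ hγ
      rw [Matrix.one_apply_ne hγ, zero_smul]
  constructor
  · intro β hβ
    have := heq ⟨β, hβ⟩
    simp only [Subtype.coe_mk] at this
    rw [this]
    apply Submodule.sum_mem
    intro α _
    by_cases h0 : CN α ⟨β, hβ⟩ = 0
    · rw [h0, zero_smul]; exact Submodule.zero_mem _
    · apply Submodule.smul_mem
      apply Submodule.subset_span
      refine ⟨↑α, α.2, ?_, rfl⟩
      rcases lex_trichotomy (↑α) β with h | h | h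
      · exact Or.inr h
      · exact Or.inl h
      · exact absurd (hCN0 α ⟨β, hβ⟩ h) h0
  · exact ⟨CN, hCN0, hCNunit, heq⟩

end
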